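/- There exists a (2,3)-biregular bipartite graph whose star chromatic index equals 4. -/

import Mathlib

open SimpleGraph

/-- A star edge coloring: a proper edge coloring with no 2-colored path or cycle
on four edges. For proper colorings, this is equivalent to requiring that every
walk of length 4 with pairwise distinct edges sees at least 3 colors. -/
def IsStarEdgeColoring {V β : Type*} [DecidableEq β] (G : SimpleGraph V)
    (c : Sym2 V → β) : Prop :=
  (∀ ⦃e₁⦄, e₁ ∈ G.edgeSet → ∀ ⦃e₂⦄, e₂ ∈ G.edgeSet → e₁ ≠ e₂ →
      (∃ v, v ∈ e₁ ∧ v ∈ e₂) → c e₁ ≠ c e₂) ∧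
  ∀ (u v : V) (p : G.Walk u v), p.length = 4 → p.edges.Nodup →
    3 ≤ (p.edges.map c).toFinset.card

/-- The star chromatic index: the least `n` such that `G` has a star edge
coloring with colors in `Fin n`. -/
noncomputable def starChromaticIndex {V : Type*} (G : SimpleGraph V) : ℕ :=
  sInf {n | ∃ c : Sym2 V → Fin n, IsStarEdgeColoring G c}

/-! ### The concrete graph -/

abbrev VV := Fin 6 ⊕ Fin 4

def edgeL : List (ℕ × ℕ) := [(0,0),(0,2),(1,0),(1,1),(2,1),(2,3),(3,2),(3,0),(4,2),(4,3),(5,3),(5,1)]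

def adjB : VV → VV → Bool
  | .inl x, .inr y => edgeL.contains (x.val, y.val)
  | .inr y, .inl x => edgeL.contains (x.val, y.val)
  | _, _ => false

def myG : SimpleGraph VV where
  Adj v w := adjB v w = true
  symm := ⟨fun a b h => (by decide : ∀ a b : VV, adjB a b = true → adjB b a = true) a b h⟩
  loopless := ⟨fun a h => (by decide : ∀ a : VV, ¬ adjB a a = true) a h⟩

instance : DecidableRel myG.Adj := fun _ _ => instDecidableEqBool _ _

/-! ### Generic lemmas -/

lemma star_of {V β : Type*} [DecidableEq β] (G : SimpleGraph V) (c : Sym2 V → β)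
    (h1 : ∀ ⦃e₁⦄, e₁ ∈ G.edgeSet → ∀ ⦃e₂⦄, e₂ ∈ G.edgeSet → e₁ ≠ e₂ →
      (∃ v, v ∈ e₁ ∧ v ∈ e₂) → c e₁ ≠ c e₂)
    (h2 : ∀ v0 v1, G.Adj v0 v1 → ∀ v2, G.Adj v1 v2 → ∀ v3, G.Adj v2 v3 →
      ∀ v4, G.Adj v3 v4 →
      ([s(v0,v1), s(v1,v2), s(v2,v3), s(v3,v4)] : List (Sym2 V)).Nodup →
      3 ≤ (([s(v0,v1), s(v1,v2), s(v2,v3), s(v3,v4)] : List (Sym2 V)).map c).toFinset.card) :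
    IsStarEdgeColoring G c := by
  refine ⟨h1, ?_⟩
  intro u v p hl hn
  cases p with
  | nil => simp at hl
  | cons a1 p =>
  cases p with
  | nil => simp at hl
  | cons a2 p =>
  cases p with
  | nil => simp at hl
  | cons a3 p =>
  cases p with
  | nil => simp at hl
  | cons a4 p =>
  cases p with
  | cons a5 p => simp [SimpleGraph.Walk.length_cons] at hl
  | nil =>
    simp only [Walk.edges_cons, Walk.edges_nil] at hn ⊢
    exact h2 _ _ a1 _ a2 _ a3 _ a4 hn

lemma list_toFinset_map {α β : Type*} [DecidableEq α] [DecidableEq β] (f : α → β)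
    (l : List α) : (l.map f).toFinset = l.toFinset.image f := by
  induction l with
  | nil => simp
  | cons a t ih => simp [ih]

lemma star_comp {V : Type*} {n m : ℕ} (hnm : n ≤ m) (G : SimpleGraph V)
    (c : Sym2 V → Fin n) (h : IsStarEdgeColoring G c) :
    IsStarEdgeColoring G (Fin.castLE hnm ∘ c) := by
  constructor
  · intro e1 m1 e2 m2 hne hsh heq
    exact h.1 m1 m2 hne hsh (Fin.castLE_injective hnm heq)
  · intro u v p hl hn
    have h3 := h.2 u v p hl hn
    have : (p.edges.map (Fin.castLE hnm ∘ c)).toFinset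
        = (p.edges.map c).toFinset.image (Fin.castLE hnm) := by
      rw [← List.map_map, list_toFinset_map]
    rw [this, Finset.card_image_of_injective _ (Fin.castLE_injective hnm)]
    exact h3

/-! ### Upper bound: a star 4-edge-coloring -/

def colP (x : Fin 6) (y : Fin 4) : Fin 4 :=
  match x.val, y.val with
  | 0, 0 => 0 | 0, 2 => 1
  | 1, 0 => 1 | 1, 1 => 2
  | 2, 1 => 0 | 2, 3 => 1
  | 3, 2 => 2 | 3, 0 => 3
  | 4, 2 => 3 | 4, 3 => 0
  | 5, 3 => 2 | 5, 1 => 3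
  | _, _ => 0

def colF : VV → VV → Fin 4
  | .inl x, .inr y => colP x y
  | .inr y, .inl x => colP x y
  | _, _ => 0

def myC : Sym2 VV → Fin 4 :=
  Sym2.lift ⟨colF, by decide⟩

set_option maxHeartbeats 1000000 in
lemma part1 : ∀ ⦃e₁⦄, e₁ ∈ myG.edgeSet → ∀ ⦃e₂⦄, e₂ ∈ myG.edgeSet → e₁ ≠ e₂ →
      (∃ v, v ∈ e₁ ∧ v ∈ e₂) → myC e₁ ≠ myC e₂ := by decide

set_option synthInstance.maxSize 4000 in
set_option maxHeartbeats 4000000 in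
lemma part2 : ∀ v0 v1, myG.Adj v0 v1 → ∀ v2, myG.Adj v1 v2 → ∀ v3, myG.Adj v2 v3 →
      ∀ v4, myG.Adj v3 v4 →
      ([s(v0,v1), s(v1,v2), s(v2,v3), s(v3,v4)] : List (Sym2 VV)).Nodup →
      3 ≤ (([s(v0,v1), s(v1,v2), s(v2,v3), s(v3,v4)] : List (Sym2 VV)).map myC).toFinset.card := by
  decide

lemma upper : IsStarEdgeColoring myG myC := star_of myG myC part1 part2

/-! ### Lower bound -/

set_option synthInstance.maxSize 2000 in
lemma key : ∀ a b c d x y : Fin 3, a ≠ b → b ≠ c → c ≠ d → d ≠ a →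
    x ≠ a → x ≠ b → y ≠ c → y ≠ d →
    3 ≤ ([a,b,c,d] : List (Fin 3)).toFinset.card →
    3 ≤ ([y,d,a,b] : List (Fin 3)).toFinset.card →
    3 ≤ ([x,a,d,c] : List (Fin 3)).toFinset.card → False := by decide

-- vertices
def u1 : VV := .inl 0
def u2 : VV := .inr 0
def u3 : VV := .inl 1
def w1 : VV := .inl 3
def w2 : VV := .inr 2
def w3 : VV := .inl 4

def P0 : myG.Walk u1 u1 :=
  .cons (show myG.Adj u1 u2 by decide) (.cons (show myG.Adj u2 w1 by decide)
    (.cons (show myG.Adj w1 w2 by decide) (.cons (show myG.Adj w2 u1 by decide) .nil)))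
def P1 : myG.Walk w3 w1 :=
  .cons (show myG.Adj w3 w2 by decide) (.cons (show myG.Adj w2 u1 by decide)
    (.cons (show myG.Adj u1 u2 by decide) (.cons (show myG.Adj u2 w1 by decide) .nil)))
def P2 : myG.Walk u3 w1 :=
  .cons (show myG.Adj u3 u2 by decide) (.cons (show myG.Adj u2 u1 by decide)
    (.cons (show myG.Adj u1 w2 by decide) (.cons (show myG.Adj w2 w1 by decide) .nil)))

lemma memE {a b : VV} (h : myG.Adj a b) : s(a,b) ∈ myG.edgeSet := myG.mem_edgeSet.mpr h

lemma lower (c : Sym2 VV → Fin 3) : ¬ IsStarEdgeColoring myG c := by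
  intro h
  have h0 := h.2 _ _ P0 rfl (by decide)
  have h1 := h.2 _ _ P1 rfl (by decide)
  have h2 := h.2 _ _ P2 rfl (by decide)
  simp only [P0, P1, P2, Walk.edges_cons, Walk.edges_nil, List.map_cons, List.map_nil] at h0 h1 h2
  refine key (c s(u1,u2)) (c s(u2,w1)) (c s(w1,w2)) (c s(w2,u1)) (c s(u3,u2)) (c s(w3,w2))
    ?_ ?_ ?_ ?_ ?_ ?_ ?_ ?_ ?_ ?_ ?_
  · exact h.1 (memE (by decide)) (memE (by decide)) (by decide) ⟨u2, by decide, by decide⟩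
  · exact h.1 (memE (by decide)) (memE (by decide)) (by decide) ⟨w1, by decide, by decide⟩
  · exact h.1 (memE (by decide)) (memE (by decide)) (by decide) ⟨w2, by decide, by decide⟩
  · exact h.1 (memE (by decide)) (memE (by decide)) (by decide) ⟨u1, by decide, by decide⟩
  · exact h.1 (memE (by decide)) (memE (by decide)) (by decide) ⟨u2, by decide, by decide⟩
  · exact h.1 (memE (by decide)) (memE (by decide)) (by decide) ⟨u2, by decide, by decide⟩
  · exact h.1 (memE (by decide)) (memE (by decide)) (by decide) ⟨w2, by decide, by decide⟩
  · exact h.1 (memE (by decide)) (memE (by decide)) (by decide) ⟨w2, by decide, by decide⟩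
  · exact h0
  · exact h1
  · rw [show s(u2,u1) = s(u1,u2) from Sym2.eq_swap, show s(u1,w2) = s(w2,u1) from Sym2.eq_swap,
      show s(w2,w1) = s(w1,w2) from Sym2.eq_swap] at h2
    exact h2

theorem exists_biregular23_star_index_four :
    ∃ (a b : ℕ) (G : SimpleGraph (Fin a ⊕ Fin b)),
      G ≤ completeBipartiteGraph (Fin a) (Fin b) ∧
      (∀ x : Fin a, (G.neighborSet (Sum.inl x)).ncard = 2) ∧
      (∀ y : Fin b, (G.neighborSet (Sum.inr y)).ncard = 3) ∧
      starChromaticIndex G = 4 := by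
  refine ⟨6, 4, myG, ?_, ?_, ?_, ?_⟩
  · intro v w hvw
    cases v <;> cases w <;> simp_all [myG, adjB, completeBipartiteGraph]
  · intro x
    rw [Set.ncard_eq_toFinset_card']
    revert x; decide
  · intro y
    rw [Set.ncard_eq_toFinset_card']
    revert y; decide
  · have hmem : 4 ∈ {n | ∃ c : Sym2 VV → Fin n, IsStarEdgeColoring myG c} := ⟨myC, upper⟩
    refine le_antisymm (Nat.sInf_le hmem) (le_csInf ⟨4, hmem⟩ ?_)
    rintro m ⟨c, hc⟩
    by_contra hlt
    push_neg at hlt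
    have hm3 : m ≤ 3 := by omega
    exact lower (Fin.castLE hm3 ∘ c) (star_comp hm3 myG c hc)
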